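/- Let Ω ⊆ ℝ^n be a convex set, let f : ℝ^n → ℝ^g be differentiable on Ω, and let G ∈ ℝ^{n×g}. For i = 1, …, n define ξ_i(x) = Σ_{j=1}^{g} G_{(i,j)}·f_j(x), i.e. ξ_i is the i-th component of G·f. Suppose γ̲, γ̄ ∈ ℝ satisfy γ̲·‖v‖² ≤ ⟨G(Df(x)(v)), v⟩ ≤ γ̄·‖v‖² for every x ∈ Ω and v ∈ ℝ^n, and suppose γ_m ∈ ℝ satisfies Σ_{i=1}^{n} ‖∇ξ_i(x)‖² ≤ γ_m for every x ∈ Ω. Then for any ε₁, ε₂ ≥ 0, f is quadratically inner-bounded on Ω with respect to G with constants γ_q1 = ε₁·γ̄ − ε₂·γ̲ + γ_m and γ_q2 = ε₂ − ε₁; that is, for all x, x̂ ∈ Ω: ‖G(f(x) − f(x̂))‖² ≤ γ_q1·‖x − x̂‖² + γ_q2·⟨G(f(x) − f(x̂)), x − x̂⟩. -/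

import Mathlib

open RealInnerProductSpace

set_option maxHeartbeats 1600000 in
/-- QIB parameterization (Theorem 4 of the paper): if `f` is differentiable on a convex set
`Ω`, `γ̲·‖v‖² ≤ ⟪G (Df x v), v⟫ ≤ γ̄·‖v‖²` on `Ω`, and `Σ_i ‖∇ξ_i(x)‖² ≤ γ_m` on `Ω`
(where `ξ_i = (G·f)_i`), then for any `ε₁, ε₂ ≥ 0`, `f` is quadratically inner-bounded
on `Ω` w.r.t. `G` with `γ_q1 = ε₁·γ̄ − ε₂·γ̲ + γ_m` and `γ_q2 = ε₂ − ε₁`. -/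
theorem qib_parameterization
    (n g : ℕ)
    (Ω : Set (EuclideanSpace ℝ (Fin n))) (hΩ : Convex ℝ Ω)
    (f : EuclideanSpace ℝ (Fin n) → EuclideanSpace ℝ (Fin g))
    (Df : EuclideanSpace ℝ (Fin n) → (EuclideanSpace ℝ (Fin n) →L[ℝ] EuclideanSpace ℝ (Fin g)))
    (hdf : ∀ x ∈ Ω, HasFDerivWithinAt f (Df x) Ω x)
    (G : Matrix (Fin n) (Fin g) ℝ)
    (γlo γhi : ℝ)
    (hbound : ∀ x ∈ Ω, ∀ v : EuclideanSpace ℝ (Fin n),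
      γlo * ‖v‖ ^ 2 ≤ ⟪(WithLp.equiv 2 (Fin n → ℝ)).symm (G.mulVec (Df x v)), v⟫ ∧
      ⟪(WithLp.equiv 2 (Fin n → ℝ)).symm (G.mulVec (Df x v)), v⟫ ≤ γhi * ‖v‖ ^ 2)
    (γm : ℝ)
    (hgrad : ∀ x ∈ Ω,
      (∑ i : Fin n, ∑ m : Fin n,
        (∑ j : Fin g, G i j * Df x (EuclideanSpace.single m 1) j) ^ 2) ≤ γm)
    (ε₁ ε₂ : ℝ) (hε₁ : 0 ≤ ε₁) (hε₂ : 0 ≤ ε₂) :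
    ∀ x ∈ Ω, ∀ y ∈ Ω,
      ‖(WithLp.equiv 2 (Fin n → ℝ)).symm (G.mulVec (f x - f y))‖ ^ 2 ≤
        (ε₁ * γhi - ε₂ * γlo + γm) * ‖x - y‖ ^ 2 +
        (ε₂ - ε₁) * ⟪(WithLp.equiv 2 (Fin n → ℝ)).symm (G.mulVec (f x - f y)), x - y⟫ := by
  intro x hx y hy
  -- the matrix as a continuous linear map
  set M : EuclideanSpace ℝ (Fin g) →L[ℝ] EuclideanSpace ℝ (Fin n) :=
    LinearMap.toContinuousLinearMap (Matrix.toEuclideanLin G) with hMdef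
  have hM : ∀ v : EuclideanSpace ℝ (Fin g), M v = (WithLp.equiv 2 (Fin n → ℝ)).symm (G.mulVec v) :=
    fun v => rfl
  -- norm-squared formula
  have hnsq : ∀ a : EuclideanSpace ℝ (Fin n), ‖a‖ ^ 2 = ∑ i, a i ^ 2 := by
    intro a
    rw [← real_inner_self_eq_norm_sq]
    simp only [PiLp.inner_apply, RCLike.inner_apply, conj_trivial, pow_two]
  -- decomposition of vectors into basis
  have hdecomp : ∀ v : EuclideanSpace ℝ (Fin n),
      v = ∑ m : Fin n, v m • EuclideanSpace.single m 1 := by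
    intro v
    have h := (EuclideanSpace.basisFun (Fin n) ℝ).sum_repr v
    simp only [EuclideanSpace.basisFun_apply, EuclideanSpace.basisFun_repr] at h
    exact h.symm
  have hγm0 : 0 ≤ γm :=
    le_trans (Finset.sum_nonneg fun i _ => Finset.sum_nonneg fun m _ => sq_nonneg _) (hgrad x hx)
  -- F = G ∘ f and its derivative
  set F : EuclideanSpace ℝ (Fin n) → EuclideanSpace ℝ (Fin n) := fun z => M (f z) with hF
  have hFderiv : ∀ z ∈ Ω, HasFDerivWithinAt F (M.comp (Df z)) Ω z := fun z hz =>
    M.hasFDerivAt.comp_hasFDerivWithinAt z (hdf z hz)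
  -- pointwise bound on the derivative: operator norm ≤ √γm
  have hopbound : ∀ z ∈ Ω, ‖M.comp (Df z)‖ ≤ Real.sqrt γm := by
    intro z hz
    refine ContinuousLinearMap.opNorm_le_bound _ (Real.sqrt_nonneg _) (fun v => ?_)
    have hsq : ‖M (Df z v)‖ ^ 2 ≤ γm * ‖v‖ ^ 2 := by
      have hcomp : ∀ j : Fin g, Df z v j =
          ∑ m : Fin n, v m * Df z (EuclideanSpace.single m 1) j := by
        intro j
        have h1 : Df z v = ∑ m : Fin n, v m • Df z (EuclideanSpace.single m 1) := by
          conv_lhs => rw [hdecomp v]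
          rw [map_sum]
          simp
        have h2 := congrArg (EuclideanSpace.proj (𝕜 := ℝ) j) h1
        simpa using h2
      rw [hnsq, hnsq]
      have key : ∀ i : Fin n, (M (Df z v) i) ^ 2 ≤
          (∑ m : Fin n, (∑ j : Fin g, G i j * Df z (EuclideanSpace.single m 1) j) ^ 2) *
            ∑ m : Fin n, v m ^ 2 := by
        intro i
        have hMi : M (Df z v) i =
            ∑ m : Fin n, (∑ j : Fin g, G i j * Df z (EuclideanSpace.single m 1) j) * v m := by
          rw [hM]
          show (G.mulVec (Df z v)) i = _
          rw [Matrix.mulVec]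
          show ∑ j, G i j * Df z v j = _
          calc ∑ j, G i j * Df z v j
              = ∑ j, ∑ m, G i j * Df z (EuclideanSpace.single m 1) j * v m := by
                refine Finset.sum_congr rfl fun j _ => ?_
                rw [hcomp j, Finset.mul_sum]
                refine Finset.sum_congr rfl fun m _ => by ring
            _ = _ := by
                rw [Finset.sum_comm]
                simp [Finset.sum_mul]
        rw [hMi]
        exact Finset.sum_mul_sq_le_sq_mul_sq _ _ _
      calc ∑ i, (M (Df z v) i) ^ 2
          ≤ ∑ i : Fin n, (∑ m : Fin n,
              (∑ j : Fin g, G i j * Df z (EuclideanSpace.single m 1) j) ^ 2) *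
              ∑ m : Fin n, v m ^ 2 := Finset.sum_le_sum fun i _ => key i
        _ = (∑ i : Fin n, ∑ m : Fin n,
              (∑ j : Fin g, G i j * Df z (EuclideanSpace.single m 1) j) ^ 2) *
              ∑ m : Fin n, v m ^ 2 := by rw [Finset.sum_mul]
        _ ≤ γm * ∑ m : Fin n, v m ^ 2 := by
            refine mul_le_mul_of_nonneg_right (hgrad z hz)
              (Finset.sum_nonneg fun m _ => sq_nonneg _)
    calc ‖(M.comp (Df z)) v‖ = Real.sqrt (‖M (Df z v)‖ ^ 2) := by
          rw [Real.sqrt_sq (norm_nonneg _)]; rfl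
      _ ≤ Real.sqrt (γm * ‖v‖ ^ 2) := Real.sqrt_le_sqrt hsq
      _ = Real.sqrt γm * ‖v‖ := by
          rw [Real.sqrt_mul hγm0, Real.sqrt_sq (norm_nonneg _)]
  -- Step A: ‖F x - F y‖² ≤ γm ‖x - y‖²
  have hA : ‖F x - F y‖ ^ 2 ≤ γm * ‖x - y‖ ^ 2 := by
    have h := hΩ.norm_image_sub_le_of_norm_hasFDerivWithin_le hFderiv hopbound hy hx
    calc ‖F x - F y‖ ^ 2 ≤ (Real.sqrt γm * ‖x - y‖) ^ 2 := by
          exact pow_le_pow_left₀ (norm_nonneg _) h 2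
      _ = γm * ‖x - y‖ ^ 2 := by
          rw [mul_pow, Real.sq_sqrt hγm0]
  -- Step B: γlo ‖x-y‖² ≤ ⟪F x - F y, x - y⟫ ≤ γhi ‖x-y‖²
  set u : EuclideanSpace ℝ (Fin n) := x - y with hu
  have hBlo : γlo * ‖u‖ ^ 2 ≤ ⟪F x - F y, u⟫ ∧ ⟪F x - F y, u⟫ ≤ γhi * ‖u‖ ^ 2 := by
    set c : ℝ := (γlo + γhi) / 2 * ‖u‖ ^ 2 with hc
    set r : ℝ := (γhi - γlo) / 2 * ‖u‖ ^ 2 with hr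
    -- the path
    set L : ℝ → EuclideanSpace ℝ (Fin n) := fun t => y + t • u with hL
    have hmaps : ∀ t ∈ Set.Icc (0:ℝ) 1, L t ∈ Ω := by
      intro t ht
      have h := hΩ hy hx (by linarith [ht.2] : (0:ℝ) ≤ 1 - t) ht.1 (by ring)
      have : L t = (1 - t) • y + t • x := by
        simp only [hL, hu, smul_sub]
        module
      rw [this]; exact h
    set h : ℝ → ℝ := fun t => ⟪F (L t), u⟫ - t * c with hh
    have hderiv : ∀ t ∈ Set.Icc (0:ℝ) 1,
        HasDerivWithinAt h (⟪M (Df (L t) u), u⟫ - c) (Set.Icc 0 1) t := by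
      intro t ht
      have hline : HasDerivWithinAt L u (Set.Icc 0 1) t := by
        have : HasDerivAt (fun t : ℝ => y + t • u) ((1:ℝ) • u) t :=
          ((hasDerivAt_id t).smul_const u).const_add y
        rw [one_smul] at this; exact this.hasDerivWithinAt
      have hFL : HasDerivWithinAt (fun t => F (L t)) ((M.comp (Df (L t))) u)
          (Set.Icc 0 1) t :=
        (hFderiv (L t) (hmaps t ht)).comp_hasDerivWithinAt t hline hmaps
      have hinner : HasDerivWithinAt (fun t => ⟪F (L t), u⟫)
          ⟪(M.comp (Df (L t))) u, u⟫ (Set.Icc 0 1) t := by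
        exact ((innerSL ℝ (E := EuclideanSpace ℝ (Fin n))).flip u).hasFDerivAt.comp_hasDerivWithinAt t hFL
      exact (hinner.sub (((hasDerivAt_id t).mul_const c).hasDerivWithinAt)).congr_deriv (by simp)
    have hdbound : ∀ t ∈ Set.Icc (0:ℝ) 1, ‖⟪M (Df (L t) u), u⟫ - c‖ ≤ r := by
      intro t ht
      have hb := hbound (L t) (hmaps t ht) u
      rw [← hM (Df (L t) u)] at hb
      rw [Real.norm_eq_abs, abs_le]
      constructor <;> [linarith [hb.1]; linarith [hb.2]]
    have hmvt := (convex_Icc (0:ℝ) 1).norm_image_sub_le_of_norm_hasDerivWithin_le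
      hderiv hdbound (Set.left_mem_Icc.2 zero_le_one) (Set.right_mem_Icc.2 zero_le_one)
    have hL0 : L 0 = y := by simp [hL]
    have hL1 : L 1 = x := by simp [hL, hu]
    have hval : h 1 - h 0 = ⟪F x - F y, u⟫ - c := by
      simp only [hh, hL0, hL1, one_mul, zero_mul, sub_zero]
      rw [inner_sub_left]
      ring
    rw [hval] at hmvt
    simp only [Real.norm_eq_abs, sub_zero, norm_one, mul_one] at hmvt
    rw [abs_le] at hmvt
    constructor <;> [linarith [hmvt.1]; linarith [hmvt.2]]
  -- put everything together
  have hw : F x - F y = (WithLp.equiv 2 (Fin n → ℝ)).symm (G.mulVec (f x - f y)) := by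
    rw [hF]
    show M (f x) - M (f y) = _
    rw [← map_sub, hM]
    rfl
  rw [← hw]
  have e1 : 0 ≤ ε₁ * (γhi * ‖u‖ ^ 2 - ⟪F x - F y, u⟫) :=
    mul_nonneg hε₁ (by linarith [hBlo.2])
  have e2 : 0 ≤ ε₂ * (⟪F x - F y, u⟫ - γlo * ‖u‖ ^ 2) :=
    mul_nonneg hε₂ (by linarith [hBlo.1])
  nlinarith [hA, e1, e2]
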